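/- Let k ≥ 2 be an integer and let G : ℝ → [0,∞) be a measurable function supported on [0,∞) with ∫_0^∞ G(t)^2 dt = 1. Then ∫_{t ∈ [0,∞)^{k−1}, t_1+⋯+t_{k−1} ≤ 1} ( ∏_{i=1}^{k−1} G(t_i) )^2 · ( ∫_0^{1−(t_1+⋯+t_{k−1})} G(u) du )^2 dt_1⋯dt_{k−1} ≥ ( ∫_0^{1/2} G(u) du )^2 · ∫_{t ∈ [0,∞)^k, t_1+⋯+t_k ≤ 1/2} ∏_{i=1}^{k} G(t_i)^2 dt_1⋯dt_k. -/

import Mathlib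

open MeasureTheory

namespace JLB

noncomputable def ff (G : ℝ → ℝ) (x : ℝ) : ENNReal := ENNReal.ofReal (G x ^ 2)

def S (m : ℕ) (a : ℝ) : Set (Fin m → ℝ) := {t | (∀ i, 0 ≤ t i) ∧ ∑ i, t i ≤ a}

lemma measurableSet_S (m : ℕ) (a : ℝ) : MeasurableSet (S m a) := by
  have h1 : MeasurableSet {t : Fin m → ℝ | ∀ i, 0 ≤ t i} := by
    rw [Set.setOf_forall]
    exact MeasurableSet.iInter fun i =>
      measurableSet_le measurable_const (measurable_pi_apply i)
  have h2 : MeasurableSet {t : Fin m → ℝ | ∑ i, t i ≤ a} :=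
    measurableSet_le (Finset.measurable_sum _ fun i _ => measurable_pi_apply i) measurable_const
  exact h1.inter h2

lemma ffm {G : ℝ → ℝ} (hG : Measurable G) : Measurable (ff G) :=
  (hG.pow_const 2).ennreal_ofReal

lemma prodm {G : ℝ → ℝ} (hG : Measurable G) (N : ℕ) :
    Measurable fun t : Fin N → ℝ => ∏ i, ff G (t i) :=
  Finset.measurable_prod _ fun i _ => (ffm hG).comp (measurable_pi_apply i)

lemma key {G : ℝ → ℝ} (hG : Measurable G)
    (hf1 : ∫⁻ x, ff G x = 1) (m : ℕ) (a : ℝ) :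
    ∫⁻ t in S (m + 1) a, ∏ i, ff G (t i) ≤ ∫⁻ y in S m a, ∏ j, ff G (y j) := by
  classical
  have hffm : Measurable (ff G) := ffm hG
  set T := MeasurableEquiv.piFinSuccAbove (fun _ : Fin (m + 1) => ℝ) 0 with hTdef
  have hTmp : MeasurePreserving T (volume : Measure (Fin (m + 1) → ℝ))
      ((volume : Measure ℝ).prod (volume : Measure (Fin m → ℝ))) := by
    have := measurePreserving_piFinSuccAbove (fun _ : Fin (m + 1) => (volume : Measure ℝ)) 0
    simpa [← volume_pi, hTdef] using this
  set g : (Fin (m + 1) → ℝ) → ENNReal :=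
    (S (m + 1) a).indicator (fun t => ∏ i, ff G (t i)) with hgdef
  have hgm : Measurable g := (prodm hG (m + 1)).indicator (measurableSet_S _ _)
  have h1 : ∫⁻ t in S (m + 1) a, ∏ i, ff G (t i) = ∫⁻ t, g t := by
    rw [hgdef, lintegral_indicator (measurableSet_S _ _)]
  have h2 : ∫⁻ t, g t = ∫⁻ z, g (T.symm z) ∂((volume : Measure ℝ).prod volume) := by
    rw [← (MeasurePreserving.symm T hTmp).map_eq, lintegral_map hgm T.symm.measurable]
  have h3 : ∫⁻ z, g (T.symm z) ∂((volume : Measure ℝ).prod volume)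
      = ∫⁻ y, ∫⁻ x, g (T.symm (x, y)) ∂volume ∂volume :=
    lintegral_prod_symm _ (hgm.comp T.symm.measurable).aemeasurable
  rw [h1, h2, h3, ← lintegral_indicator (measurableSet_S m a)]
  refine lintegral_mono fun y => ?_
  have hins : ∀ x : ℝ, T.symm (x, y) = (0 : Fin (m + 1)).insertNth x y := by
    intro x
    simp [hTdef, MeasurableEquiv.piFinSuccAbove_symm_apply, Fin.insertNthEquiv]
  have hpt : ∀ x : ℝ,
      g (T.symm (x, y)) ≤ (S m a).indicator (fun y => ∏ j, ff G (y j)) y * ff G x := by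
    intro x
    rw [hins x, hgdef]
    by_cases hmem : (0 : Fin (m + 1)).insertNth x y ∈ S (m + 1) a
    · obtain ⟨hpos, hsum⟩ := hmem
      have hx0 : 0 ≤ x := by simpa using hpos 0
      have hy : y ∈ S m a := by
        constructor
        · intro j
          have := hpos ((0 : Fin (m + 1)).succAbove j)
          simpa using this
        · have hs : ∑ i, (0 : Fin (m + 1)).insertNth x y i
              = x + ∑ j, y j := by
            rw [Fin.sum_univ_succAbove _ (0 : Fin (m + 1))]
            simp
          rw [hs] at hsum
          linarith
      rw [Set.indicator_of_mem (show Fin.insertNth 0 x y ∈ S (m+1) a from ⟨hpos, hsum⟩),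
        Set.indicator_of_mem hy]
      rw [Fin.prod_univ_succAbove _ (0 : Fin (m + 1))]
      simp [mul_comm]
    · rw [Set.indicator_of_notMem hmem]
      exact zero_le
  calc ∫⁻ x, g (T.symm (x, y))
      ≤ ∫⁻ x, (S m a).indicator (fun y => ∏ j, ff G (y j)) y * ff G x :=
        lintegral_mono hpt
    _ = (S m a).indicator (fun y => ∏ j, ff G (y j)) y * ∫⁻ x, ff G x :=
        lintegral_const_mul _ hffm
    _ = (S m a).indicator (fun y => ∏ j, ff G (y j)) y := by rw [hf1, mul_one]

lemma bound {G : ℝ → ℝ} (hG : Measurable G) (hf1 : ∫⁻ x, ff G x = 1) (m : ℕ) (a : ℝ) :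
    ∫⁻ y in S m a, ∏ j, ff G (y j) ≤ 1 := by
  induction m generalizing a with
  | zero =>
    calc ∫⁻ y in S 0 a, ∏ j, ff G (y j) = ∫⁻ _ in S 0 a, (1 : ENNReal) := by simp
      _ = volume (S 0 a) := setLIntegral_one _
      _ ≤ volume (Set.univ : Set (Fin 0 → ℝ)) := measure_mono (Set.subset_univ _)
      _ = 1 := by
        rw [volume_pi, Measure.pi_univ]
        simp
  | succ m ih => exact (key hG hf1 m a).trans (ih a)

end JLB

/-- The concentration inequality `∑_ℓ J_ℓ ≥ (∫_0^{1/2} G)² · P(∑ Zᵢ < 1/2)` (one term):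
for `k ≥ 2` and a measurable `G : ℝ → [0,∞)` supported on `[0,∞)` with
`∫_0^∞ G² = 1`, the `(k−1)`-dimensional integral of `(∏ G(tᵢ))² (∫_0^{1−∑tᵢ} G)²`
over the simplex `∑ tᵢ ≤ 1` is at least
`(∫_0^{1/2} G)²` times the `k`-dimensional integral of `∏ G(tᵢ)²` over `∑ tᵢ ≤ 1/2`. -/
theorem J_lower_bound (k : ℕ) (hk : 2 ≤ k) (G : ℝ → ℝ)
    (hG : Measurable G) (hGnonneg : ∀ t, 0 ≤ G t)
    (hGsupp : ∀ t : ℝ, t < 0 → G t = 0)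
    (hGnorm : ∫ t in Set.Ioi (0 : ℝ), G t ^ 2 = 1) :
    (∫ u in (0 : ℝ)..(1 / 2 : ℝ), G u) ^ 2 *
        ∫ t in {t : Fin k → ℝ | (∀ i, 0 ≤ t i) ∧ ∑ i, t i ≤ 1 / 2}, ∏ i, G (t i) ^ 2 ≤
      ∫ t in {t : Fin (k - 1) → ℝ | (∀ i, 0 ≤ t i) ∧ ∑ i, t i ≤ 1},
        (∏ i, G (t i)) ^ 2 * (∫ u in (0 : ℝ)..(1 - ∑ i, t i), G u) ^ 2 := by
  classical
  obtain ⟨n, rfl⟩ : ∃ n, k = n + 1 := ⟨k - 1, by omega⟩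
  have hffm : Measurable (JLB.ff G) := JLB.ffm hG
  -- square of G is integrable on Ioi 0
  have hGsq_int : IntegrableOn (fun t => G t ^ 2) (Set.Ioi (0 : ℝ)) volume := by
    by_contra h
    rw [integral_undef h] at hGnorm
    norm_num at hGnorm
  -- the lintegral of ff G over ℝ is 1
  have hf1 : ∫⁻ x, JLB.ff G x = 1 := by
    have h0 : ∫⁻ x in Set.Ioi (0 : ℝ), JLB.ff G x = 1 := by
      have := integral_eq_lintegral_of_nonneg_ae
        (μ := volume.restrict (Set.Ioi (0 : ℝ))) (f := fun t => G t ^ 2)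
        (ae_of_all _ fun t => sq_nonneg _) (hG.pow_const 2).aestronglyMeasurable
      rw [hGnorm] at this
      exact (ENNReal.toReal_eq_one_iff _).mp this.symm
    have hne : ∀ᵐ x : ℝ ∂volume, x ≠ 0 := by
      rw [ae_iff]
      simpa [not_not, Set.setOf_eq_eq_singleton] using Real.volume_singleton (x := (0 : ℝ))
    have h00 : ∀ᵐ x : ℝ ∂volume, x ∈ Set.Iic (0 : ℝ) → JLB.ff G x = 0 := by
      filter_upwards [hne] with x hx hxle
      have hxlt : x < 0 := lt_of_le_of_ne hxle hx
      simp [JLB.ff, hGsupp x hxlt]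
    have hcompl : ∫⁻ x in Set.Iic (0 : ℝ), JLB.ff G x = 0 := by
      rw [show (0 : ENNReal) = ∫⁻ _ in Set.Iic (0 : ℝ), (0 : ENNReal) by simp]
      exact lintegral_congr_ae ((ae_restrict_iff' measurableSet_Iic).mpr h00)
    have := lintegral_add_compl (JLB.ff G) (measurableSet_Ioi (a := (0 : ℝ))) (μ := volume)
    rw [Set.compl_Ioi, h0, hcompl, add_zero] at this
    exact this.symm
  -- G is interval integrable everywhere
  have h0int : ∀ f : ℝ → ℝ, IntegrableOn f ({0} : Set ℝ) := by
    intro f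
    rw [IntegrableOn, Measure.restrict_eq_zero.mpr (by simp)]
    exact integrable_zero_measure
  have hIccsq : ∀ b : ℝ, IntegrableOn (fun t => G t ^ 2) (Set.Icc (0 : ℝ) b) := by
    intro b
    have h1 : IntegrableOn (fun t => G t ^ 2) (Set.Ioc (0 : ℝ) b ∪ {0}) :=
      (hGsq_int.mono_set Set.Ioc_subset_Ioi_self).union (h0int _)
    refine h1.mono_set ?_
    intro x hx
    rcases eq_or_lt_of_le hx.1 with h | h
    · exact Or.inr (by simp [← h])
    · exact Or.inl ⟨h, hx.2⟩
  have hIcc : ∀ b : ℝ, IntegrableOn G (Set.Icc (0 : ℝ) b) := by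
    intro b
    have hdom : IntegrableOn (fun t => 1 + G t ^ 2) (Set.Icc (0 : ℝ) b) :=
      (integrableOn_const measure_Icc_lt_top.ne).add (hIccsq b)
    refine hdom.mono' hG.aestronglyMeasurable (ae_of_all _ fun x => ?_)
    rw [Real.norm_eq_abs, abs_of_nonneg (hGnonneg x)]
    nlinarith [sq_nonneg (G x - 1), hGnonneg x]
  have hIio : IntegrableOn G (Set.Iio (0 : ℝ)) := by
    refine (integrableOn_zero (ε' := ℝ)).congr_fun ?_ measurableSet_Iio
    exact fun x hx => (hGsupp x hx).symm
  have hIoc : ∀ a b : ℝ, IntegrableOn G (Set.Ioc a b) := by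
    intro a b
    refine (hIio.union (hIcc b)).mono_set ?_
    intro x hx
    rcases lt_or_ge x 0 with h | h
    · exact Or.inl h
    · exact Or.inr ⟨h, hx.2⟩
  have hIntG : ∀ a b : ℝ, IntervalIntegrable G volume a b := by
    intro a b
    rw [intervalIntegrable_iff]
    rw [Set.uIoc]
    exact hIoc _ _
  -- the primitive
  set prim : ℝ → ℝ := fun x => ∫ u in (0 : ℝ)..x, G u with hprimdef
  have hprim_cont : Continuous prim := intervalIntegral.continuous_primitive hIntG 0
  have hprim_mono : ∀ x y : ℝ, x ≤ y → prim x ≤ prim y := by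
    intro x y hxy
    have h1 := intervalIntegral.integral_add_adjacent_intervals (hIntG 0 x) (hIntG x y)
    have h2 : 0 ≤ ∫ u in x..y, G u := intervalIntegral.integral_nonneg hxy fun u _ => hGnonneg u
    simp only [hprimdef]
    linarith [h1]
  have hprim0 : prim 0 = 0 := intervalIntegral.integral_same
  have hprim_nonneg : ∀ x : ℝ, 0 ≤ x → 0 ≤ prim x := fun x hx => hprim0 ▸ hprim_mono 0 x hx
  set c : ℝ := prim (1 / 2) with hcdef
  have hc0 : 0 ≤ c := hprim_nonneg _ (by norm_num)
  -- measurable sum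
  have hsumm : ∀ N : ℕ, Measurable fun t : Fin N → ℝ => ∑ i, t i := fun N =>
    Finset.measurable_sum _ fun i _ => measurable_pi_apply i
  -- lintegral quantities
  set B : ENNReal := ∫⁻ t in JLB.S (n + 1) (1 / 2), ∏ i, JLB.ff G (t i) with hBdef
  set C : ENNReal := ∫⁻ t in JLB.S n 1,
    (∏ i, JLB.ff G (t i)) * ENNReal.ofReal (prim (1 - ∑ i, t i) ^ 2) with hCdef
  -- conversion of the LHS integral
  have hBconv : ∫ t in JLB.S (n + 1) (1 / 2), ∏ i, G (t i) ^ 2 = B.toReal := by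
    have hm1 : Measurable fun t : Fin (n + 1) → ℝ => ∏ i, G (t i) ^ 2 := by
      apply Finset.measurable_prod
      intro i _
      exact (hG.comp (measurable_pi_apply i)).pow_const 2
    rw [integral_eq_lintegral_of_nonneg_ae
      (ae_of_all _ fun t => Finset.prod_nonneg fun i _ => sq_nonneg _)
      hm1.aestronglyMeasurable]
    congr 1
    refine lintegral_congr fun t => ?_
    rw [ENNReal.ofReal_prod_of_nonneg fun i _ => sq_nonneg _]
    rfl
  have hCconv : ∫ t in JLB.S n 1, (∏ i, G (t i)) ^ 2 * prim (1 - ∑ i, t i) ^ 2 = C.toReal := by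
    have hm2 : Measurable fun t : Fin n → ℝ => (∏ i, G (t i)) ^ 2 * prim (1 - ∑ i, t i) ^ 2 := by
      apply Measurable.mul
      · exact (Finset.measurable_prod Finset.univ fun i _ =>
          hG.comp (measurable_pi_apply i)).pow_const 2
      · exact (hprim_cont.measurable.comp (measurable_const.sub (hsumm n))).pow_const 2
    rw [integral_eq_lintegral_of_nonneg_ae
      (ae_of_all _ fun t => mul_nonneg (sq_nonneg _) (sq_nonneg _))
      hm2.aestronglyMeasurable]
    congr 1
    refine lintegral_congr fun t => ?_
    rw [ENNReal.ofReal_mul (sq_nonneg _), ← Finset.prod_pow,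
      ENNReal.ofReal_prod_of_nonneg fun i _ => sq_nonneg _]
    rfl
  -- the main chain in ENNReal
  have hBle : B ≤ ∫⁻ y in JLB.S n (1 / 2), ∏ j, JLB.ff G (y j) := JLB.key hG hf1 n (1 / 2)
  have hB1 : B ≤ 1 := hBle.trans (JLB.bound hG hf1 n (1 / 2))
  have hmain : ENNReal.ofReal (c ^ 2) * B ≤ C := by
    calc ENNReal.ofReal (c ^ 2) * B
        ≤ ENNReal.ofReal (c ^ 2) * ∫⁻ y in JLB.S n (1 / 2), ∏ j, JLB.ff G (y j) :=
          mul_le_mul_right hBle _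
      _ = ∫⁻ t in JLB.S n (1 / 2), ENNReal.ofReal (c ^ 2) * ∏ j, JLB.ff G (t j) :=
          (lintegral_const_mul _ (JLB.prodm hG n)).symm
      _ ≤ ∫⁻ t in JLB.S n (1 / 2),
            (∏ j, JLB.ff G (t j)) * ENNReal.ofReal (prim (1 - ∑ i, t i) ^ 2) := by
          refine setLIntegral_mono' (JLB.measurableSet_S n (1 / 2)) fun t ht => ?_
          rw [mul_comm]
          refine mul_le_mul_right (ENNReal.ofReal_le_ofReal ?_) _
          have h12 : (1 / 2 : ℝ) ≤ 1 - ∑ i, t i := by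
            have := ht.2
            linarith
          exact pow_le_pow_left₀ hc0 (hprim_mono _ _ h12) 2
      _ ≤ C := by
          rw [hCdef]
          refine lintegral_mono_set fun t ht => ?_
          exact ⟨ht.1, ht.2.trans (by norm_num)⟩
  have hCfin : C ≠ ⊤ := by
    have hCle : C ≤ ENNReal.ofReal (prim 1 ^ 2) * ∫⁻ t in JLB.S n 1, ∏ j, JLB.ff G (t j) := by
      rw [hCdef]
      calc ∫⁻ t in JLB.S n 1, (∏ i, JLB.ff G (t i)) * ENNReal.ofReal (prim (1 - ∑ i, t i) ^ 2)
          ≤ ∫⁻ t in JLB.S n 1, (∏ i, JLB.ff G (t i)) * ENNReal.ofReal (prim 1 ^ 2) := by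
            refine setLIntegral_mono' (JLB.measurableSet_S n 1) fun t ht => ?_
            refine mul_le_mul_right (ENNReal.ofReal_le_ofReal ?_) _
            have h01 : (0 : ℝ) ≤ 1 - ∑ i, t i := by linarith [ht.2]
            have hle1 : (1 : ℝ) - ∑ i, t i ≤ 1 := by
              have : 0 ≤ ∑ i, t i := Finset.sum_nonneg fun i _ => ht.1 i
              linarith
            exact pow_le_pow_left₀ (hprim_nonneg _ h01) (hprim_mono _ _ hle1) 2
        _ = ENNReal.ofReal (prim 1 ^ 2) * ∫⁻ t in JLB.S n 1, ∏ j, JLB.ff G (t j) := by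
            rw [lintegral_mul_const _ (JLB.prodm hG n), mul_comm]
    have : C ≤ ENNReal.ofReal (prim 1 ^ 2) * 1 :=
      hCle.trans (mul_le_mul_right (JLB.bound hG hf1 n 1) _)
    exact (this.trans_lt (by simpa using ENNReal.ofReal_lt_top)).ne
  -- finish
  show c ^ 2 * ∫ t in JLB.S (n + 1) (1 / 2), ∏ i, G (t i) ^ 2 ≤
    ∫ t in JLB.S n 1, (∏ i, G (t i)) ^ 2 * prim (1 - ∑ i, t i) ^ 2
  rw [hBconv, hCconv]
  have hfinal : (ENNReal.ofReal (c ^ 2) * B).toReal ≤ C.toReal :=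
    ENNReal.toReal_mono hCfin hmain
  rwa [ENNReal.toReal_mul, ENNReal.toReal_ofReal (sq_nonneg c)] at hfinal
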